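/- Let G be a countably infinite group. For every continuous action of G on a Polish space X, there is a G-invariant Polish subspace Y ⊆ 4^G = {1,2,3,4}^G (i.e. a G-invariant G_δ subset of the compact space 4^G with the shift action) and a continuous G-equivariant surjection from Y onto X. -/

import Mathlib

/-- The left shift action of `G` on the Bernoulli shift `K^G`. -/
def bshift {G : Type*} [Group G] (K : Type*) (g : G) (x : G → K) : G → K :=
  fun h => x (g⁻¹ * h)

open Set Topology Filter

theorem isGδ_preimage' {A B : Type*} [TopologicalSpace A] [TopologicalSpace B]
    {f : A → B} (hf : Continuous f) {s : Set B} (hs : IsGδ s) : IsGδ (f ⁻¹' s) := by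
  obtain ⟨U, hU, rfl⟩ := isGδ_iff_eq_iInter_nat.1 hs
  rw [preimage_iInter]
  exact .iInter fun n => ((hU n).preimage hf).isGδ

theorem isGδ_transfer {A : Type*} [TopologicalSpace A] {s t : Set A}
    (hs : IsGδ s) (hts : t ⊆ s) (h : IsGδ ((Subtype.val ⁻¹' t) : Set s)) : IsGδ t := by
  obtain ⟨U, hU, hUeq⟩ := isGδ_iff_eq_iInter_nat.1 h
  choose V hVopen hVeq using fun n => isOpen_induced_iff.1 (hU n)
  have ht : t = s ∩ ⋂ n, V n := by
    ext a
    constructor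
    · intro ha
      have has : a ∈ s := hts ha
      refine ⟨has, mem_iInter.2 fun n => ?_⟩
      have h1 : (⟨a, has⟩ : s) ∈ Subtype.val ⁻¹' t := ha
      rw [hUeq] at h1
      have := mem_iInter.1 h1 n
      rw [← hVeq n] at this
      exact this
    · rintro ⟨has, hV⟩
      have h1 : (⟨a, has⟩ : s) ∈ ⋂ n, U n := mem_iInter.2 fun n => by
        rw [← hVeq n]; exact mem_preimage.2 (mem_iInter.1 hV n)
      rw [← hUeq] at h1
      exact h1
  rw [ht]
  exact hs.inter (.iInter fun n => (hVopen n).isGδ)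

theorem isGδ_of_isClosed' {A : Type*} [TopologicalSpace A]
    [TopologicalSpace.PseudoMetrizableSpace A] {s : Set A} (hs : IsClosed s) : IsGδ s := by
  letI := TopologicalSpace.pseudoMetrizableSpacePseudoMetric A
  exact hs.isGδ



noncomputable section
variable {X : Type} [MetricSpace X]

/-- embedding of a separable complete metric space into ℝ^ℕ via distances to a dense sequence -/
def iEmb (u : ℕ → X) (x : X) : ℕ → ℝ := fun n => dist x (u n)

def iSet (u : ℕ → X) : Set (ℕ → ℝ) :=
  {a | (∀ n m, |a n - a m| ≤ dist (u n) (u m) ∧ dist (u n) (u m) ≤ a n + a m) ∧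
       ∀ k : ℕ, ∃ n, a n < 1 / (k + 1)}

theorem iEmb_continuous (u : ℕ → X) : Continuous (iEmb u) :=
  continuous_pi fun n => continuous_id.dist continuous_const

theorem range_iEmb [CompleteSpace X] {u : ℕ → X} (hu : DenseRange u) :
    range (iEmb u) = iSet u := by
  apply Subset.antisymm
  · rintro _ ⟨x, rfl⟩
    constructor
    · intro n m
      constructor
      · have := abs_dist_sub_le (u n) (u m) x
        simpa [iEmb, dist_comm] using this
      · have := dist_triangle (u n) x (u m)
        simpa [iEmb, dist_comm, add_comm] using this
    · intro k
      obtain ⟨n, hn⟩ := hu.exists_dist_lt x (show (0:ℝ) < 1/(k+1) by positivity)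
      exact ⟨n, by simpa [iEmb, dist_comm] using hn⟩
  · rintro a ⟨h1, h2⟩
    choose n hn using h2
    have hCauchy : CauchySeq fun k => u (n k) := by
      rw [Metric.cauchySeq_iff]
      intro ε hε
      obtain ⟨N, hN⟩ := exists_nat_gt (2 / ε)
      refine ⟨N, fun k hk l hl => ?_⟩
      have hb : dist (u (n k)) (u (n l)) ≤ a (n k) + a (n l) := (h1 _ _).2
      have hk1 : a (n k) < 1 / (N + 1) :=
        lt_of_lt_of_le (hn k) (by
          apply one_div_le_one_div_of_le (by positivity)
          exact_mod_cast Nat.succ_le_succ hk)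
      have hl1 : a (n l) < 1 / (N + 1) :=
        lt_of_lt_of_le (hn l) (by
          apply one_div_le_one_div_of_le (by positivity)
          exact_mod_cast Nat.succ_le_succ hl)
      have h2N : 2 / (N + 1 : ℝ) < ε := by
        rw [div_lt_iff₀ (by positivity)]
        rw [div_lt_iff₀ hε] at hN
        nlinarith [hN]
      calc dist (u (n k)) (u (n l)) ≤ a (n k) + a (n l) := hb
        _ < 1/(N+1) + 1/(N+1) := by linarith
        _ = 2 / (N+1) := by ring
        _ < ε := h2N
    obtain ⟨x, hx⟩ := cauchySeq_tendsto_of_complete hCauchy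
    refine ⟨x, ?_⟩
    funext m
    have hd : Tendsto (fun k => dist (u (n k)) (u m)) atTop (𝓝 (dist x (u m))) :=
      (hx.dist tendsto_const_nhds)
    have hsq : Tendsto (fun k => dist (u (n k)) (u m)) atTop (𝓝 (a m)) := by
      have h0 : Tendsto (fun k : ℕ => (1:ℝ)/(k+1)) atTop (𝓝 0) :=
        tendsto_one_div_add_atTop_nhds_zero_nat
      have hlow : Tendsto (fun k : ℕ => a m - 1/(k+1)) atTop (𝓝 (a m)) := by
        simpa using tendsto_const_nhds.sub h0
      have hhigh : Tendsto (fun k : ℕ => a m + 1/(k+1)) atTop (𝓝 (a m)) := by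
        simpa using tendsto_const_nhds.add h0
      refine tendsto_of_tendsto_of_tendsto_of_le_of_le hlow hhigh ?_ ?_
      · intro k
        have := (h1 (n k) m).1
        have habs : a m - a (n k) ≤ dist (u (n k)) (u m) := by
          have := abs_le.1 this
          linarith [this.1]
        have : a m - 1/(k+1) ≤ a m - a (n k) := by linarith [le_of_lt (hn k)]
        linarith
      · intro k
        have := (h1 (n k) m).2
        have := le_of_lt (hn k)
        linarith
    have := tendsto_nhds_unique hd hsq
    simpa [iEmb] using this

theorem isGδ_iSet (u : ℕ → X) : IsGδ (iSet u) := by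
  have h1 : IsGδ {a : ℕ → ℝ | ∀ n m, |a n - a m| ≤ dist (u n) (u m) ∧
      dist (u n) (u m) ≤ a n + a m} := by
    have : {a : ℕ → ℝ | ∀ n m, |a n - a m| ≤ dist (u n) (u m) ∧
        dist (u n) (u m) ≤ a n + a m} =
        ⋂ p : ℕ × ℕ, {a : ℕ → ℝ | |a p.1 - a p.2| ≤ dist (u p.1) (u p.2) ∧
          dist (u p.1) (u p.2) ≤ a p.1 + a p.2} := by
      ext a; simp [Prod.forall]
    rw [this]
    refine .iInter fun p => IsGδ.inter ?_ ?_
    · exact (isClosed_le (((continuous_apply p.1).sub (continuous_apply p.2)).abs)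
        continuous_const).isGδ
    · exact (isClosed_le continuous_const
        ((continuous_apply p.1).add (continuous_apply p.2))).isGδ
  have h2 : IsGδ {a : ℕ → ℝ | ∀ k : ℕ, ∃ n, a n < 1 / (k + 1)} := by
    have : {a : ℕ → ℝ | ∀ k : ℕ, ∃ n, a n < 1 / (k + 1)} =
        ⋂ k : ℕ, ⋃ n : ℕ, {a : ℕ → ℝ | a n < 1 / (k + 1)} := by
      ext a; simp
    rw [this]
    refine .iInter fun k => IsOpen.isGδ (isOpen_iUnion fun n => ?_)
    exact isOpen_lt (continuous_apply n) continuous_const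
  exact h1.inter h2

theorem iEmb_nhds [CompleteSpace X] {u : ℕ → X} (hu : DenseRange u) (x : X) :
    𝓝 x = Filter.comap (iEmb u) (𝓝 (iEmb u x)) := by
  refine le_antisymm ?_ ?_
  · exact ((iEmb_continuous u).tendsto x).le_comap
  · intro s hs
    rw [Metric.mem_nhds_iff] at hs
    obtain ⟨ε, hε, hball⟩ := hs
    obtain ⟨n, hn⟩ := hu.exists_dist_lt x (show (0:ℝ) < ε/3 by linarith)
    refine mem_comap.2 ⟨{a | |a n - iEmb u x n| < ε/3}, ?_, ?_⟩
    · have : IsOpen {a : ℕ → ℝ | |a n - iEmb u x n| < ε/3} :=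
        isOpen_lt ((continuous_apply n).sub continuous_const).abs continuous_const
      exact this.mem_nhds (by simp only [mem_setOf_eq, sub_self, abs_zero]; positivity)
    · intro y hy
      apply hball
      simp only [mem_preimage, mem_setOf_eq, iEmb] at hy
      have h1 : dist y (u n) < dist x (u n) + ε/3 := by
        have := abs_lt.1 hy
        linarith [this.1, this.2]
      have : dist y x ≤ dist y (u n) + dist (u n) x := dist_triangle _ _ _
      rw [Metric.mem_ball]
      have hxn : dist x (u n) < ε/3 := hn
      calc dist y x ≤ dist y (u n) + dist (u n) x := this
        _ < (dist x (u n) + ε/3) + dist (u n) x := by linarith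
        _ < ε := by rw [dist_comm (u n) x]; linarith

theorem cont_of_comp_iEmb [CompleteSpace X] {u : ℕ → X} (hu : DenseRange u)
    {Z : Type*} [TopologicalSpace Z] (f : Z → X)
    (hf : Continuous fun z => iEmb u (f z)) : Continuous f := by
  rw [continuous_iff_continuousAt]
  intro z
  unfold ContinuousAt
  rw [iEmb_nhds hu (f z), tendsto_comap_iff]
  exact hf.tendsto z

theorem iEmb_injective [CompleteSpace X] {u : ℕ → X} (hu : DenseRange u) :
    Function.Injective (iEmb u) := by
  intro x y hxy
  by_contra hne
  have hpos : 0 < dist x y := dist_pos.2 hne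
  obtain ⟨n, hn⟩ := hu.exists_dist_lt x (show (0:ℝ) < dist x y / 2 by linarith)
  have h2 : dist y (u n) = dist x (u n) := by
    have := congrFun hxy n
    simpa [iEmb] using this.symm
  have : dist x y ≤ dist x (u n) + dist (u n) y := dist_triangle _ _ _
  rw [dist_comm (u n) y, h2] at this
  linarith

namespace S6

def b1 (v : Fin 4) : Bool := decide (v.val % 2 = 1)
def b2 (v : Fin 4) : Bool := decide (v.val / 2 = 1)
def mk4 (p q : Bool) : Fin 4 :=
  ⟨(cond p 1 0) + 2 * (cond q 1 0), by cases p <;> cases q <;> simp⟩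

@[simp] theorem b1_mk4 (p q : Bool) : b1 (mk4 p q) = p := by cases p <;> cases q <;> rfl
@[simp] theorem b2_mk4 (p q : Bool) : b2 (mk4 p q) = q := by cases p <;> cases q <;> rfl

variable {G : Type*} [Group G]

/-- site in `G` where the `j`-th bit of the `m`-th number attached to group element `h` is
stored, relative to anchor `s`. -/
def site (eG : ℕ ≃ G) (s h : G) (m j : ℕ) : G :=
  s * (eG (Nat.pair (eG.symm (s⁻¹ * h)) (Nat.pair m j)))⁻¹

theorem site_shift (eG : ℕ ≃ G) (g s h : G) (m j : ℕ) :
    site eG (g * s) h m j = g * site eG s (g⁻¹ * h) m j := by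
  simp [site, mul_assoc, mul_inv_rev]

/-- the anchor point of a configuration. -/
def spt (y : G → Fin 4) : G :=
  haveI := Classical.dec (∃ k, b1 (y k) = true)
  if h : ∃ k, b1 (y k) = true then h.choose else 1

def Aset (G : Type*) [Group G] : Set (G → Fin 4) := {y | ∃! k, b1 (y k) = true}

theorem spt_spec {y : G → Fin 4} (hy : y ∈ Aset G) :
    b1 (y (spt y)) = true ∧ ∀ k, b1 (y k) = true → k = spt y := by
  obtain ⟨k₀, hk₀, huniq⟩ := hy
  have hex : ∃ k, b1 (y k) = true := ⟨k₀, hk₀⟩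
  have h1 : b1 (y (spt y)) = true := by
    unfold spt
    rw [dif_pos hex]
    exact hex.choose_spec
  refine ⟨h1, fun k hk => ?_⟩
  rw [huniq k hk, huniq _ h1]

theorem Aset_shift {y : G → Fin 4} (g : G) (hy : y ∈ Aset G) :
    bshift (Fin 4) g y ∈ Aset G := by
  obtain ⟨k₀, hk₀, huniq⟩ := hy
  refine ⟨g * k₀, ?_, fun k hk => ?_⟩
  · simpa [bshift] using hk₀
  · have : g⁻¹ * k = k₀ := huniq _ hk
    rw [← this]; simp

theorem spt_shift {y : G → Fin 4} (g : G) (hy : y ∈ Aset G) :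
    spt (bshift (Fin 4) g y) = g * spt y := by
  have h1 := spt_spec (Aset_shift g hy)
  have h2 := spt_spec hy
  have : b1 ((bshift (Fin 4) g y) (g * spt y)) = true := by
    simpa [bshift] using h2.1
  exact (h1.2 _ this).symm

theorem shift_site_eq (eG : ℕ ≃ G) {y : G → Fin 4} (g h : G) (m j : ℕ) (hy : y ∈ Aset G) :
    (bshift (Fin 4) g y) (site eG (spt (bshift (Fin 4) g y)) h m j)
      = y (site eG (spt y) (g⁻¹ * h) m j) := by
  rw [spt_shift g hy, site_shift]
  simp [bshift]

/-- the `m`-th natural number attached to group element `h` in configuration `y`. -/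
def natv (eG : ℕ ≃ G) (y : G → Fin 4) (h : G) (m : ℕ) : ℕ :=
  sInf {j | b2 (y (site eG (spt y) h m j)) = true}

def Dset (eG : ℕ ≃ G) : Set (G → Fin 4) :=
  {y | ∀ h m, ∃ j, b2 (y (site eG (spt y) h m j)) = true}

theorem natv_shift (eG : ℕ ≃ G) {y : G → Fin 4} (g h : G) (m : ℕ) (hy : y ∈ Aset G) :
    natv eG (bshift (Fin 4) g y) h m = natv eG y (g⁻¹ * h) m := by
  unfold natv
  congr 1
  ext j
  rw [mem_setOf_eq, mem_setOf_eq, shift_site_eq eG g h m j hy]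

theorem Dset_shift (eG : ℕ ≃ G) {y : G → Fin 4} (g : G) (hy : y ∈ Aset G)
    (hd : y ∈ Dset eG) : bshift (Fin 4) g y ∈ Dset eG := by
  intro h m
  obtain ⟨j, hj⟩ := hd (g⁻¹ * h) m
  exact ⟨j, by rw [shift_site_eq eG g h m j hy]; exact hj⟩


theorem isOpen_coord {K : Type*} [TopologicalSpace K] [DiscreteTopology K]
    (c : G) (S : Set K) : IsOpen {y : G → K | y c ∈ S} :=
  (isOpen_discrete S).preimage (continuous_apply c)

theorem isGδ_Aset [Countable G] : IsGδ (Aset G) := by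
  have heq : Aset G = ({y : G → Fin 4 | ∃ k, b1 (y k) = true}) ∩
      ⋂ p : G × G, {y | b1 (y p.1) = true → b1 (y p.2) = true → p.1 = p.2} := by
    ext y
    constructor
    · rintro ⟨k₀, hk₀, huniq⟩
      refine ⟨⟨k₀, hk₀⟩, mem_iInter.2 fun p h1 h2 => ?_⟩
      rw [huniq p.1 h1, huniq p.2 h2]
    · rintro ⟨⟨k₀, hk₀⟩, hpair⟩
      exact ⟨k₀, hk₀, fun k hk => mem_iInter.1 hpair (k, k₀) hk hk₀⟩
  rw [heq]
  refine IsGδ.inter (IsOpen.isGδ ?_) (.iInter fun p => isGδ_of_isClosed' ?_)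
  · have : {y : G → Fin 4 | ∃ k, b1 (y k) = true} =
        ⋃ k, {y : G → Fin 4 | y k ∈ {v | b1 v = true}} := by
      ext y; simp
    rw [this]
    exact isOpen_iUnion fun k => isOpen_coord k _
  · by_cases hp : p.1 = p.2
    · have : {y : G → Fin 4 | b1 (y p.1) = true → b1 (y p.2) = true → p.1 = p.2} = univ := by
        ext y; simp [hp]
      rw [this]; exact isClosed_univ
    · rw [← isOpen_compl_iff]
      have : {y : G → Fin 4 | b1 (y p.1) = true → b1 (y p.2) = true → p.1 = p.2}ᶜ =
          {y : G → Fin 4 | y p.1 ∈ {v | b1 v = true}} ∩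
          {y : G → Fin 4 | y p.2 ∈ {v | b1 v = true}} := by
        ext y
        simp only [mem_compl_iff, mem_setOf_eq, mem_inter_iff]
        constructor
        · intro hcon
          by_contra hc
          push_neg at hc
          tauto
        · rintro ⟨h1, h2⟩ hcon
          exact hp (hcon h1 h2)
      rw [this]
      exact (isOpen_coord _ _).inter (isOpen_coord _ _)

theorem isGδ_AD [Countable G] (eG : ℕ ≃ G) : IsGδ (Aset G ∩ Dset eG) := by
  have heq : Aset G ∩ Dset eG = Aset G ∩
      ⋂ p : G × ℕ, ⋃ q : G × ℕ,
        ({y : G → Fin 4 | y q.1 ∈ {v | b1 v = true}} ∩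
         {y | y (site eG q.1 p.1 p.2 q.2) ∈ {v | b2 v = true}}) := by
    ext y
    constructor
    · rintro ⟨hA, hD⟩
      refine ⟨hA, mem_iInter.2 fun p => ?_⟩
      obtain ⟨j, hj⟩ := hD p.1 p.2
      exact mem_iUnion.2 ⟨(spt y, j), (spt_spec hA).1, hj⟩
    · rintro ⟨hA, hD⟩
      refine ⟨hA, fun h m => ?_⟩
      obtain ⟨q, hq1, hq2⟩ := mem_iUnion.1 (mem_iInter.1 hD (h, m))
      have : q.1 = spt y := (spt_spec hA).2 q.1 hq1
      rw [this] at hq2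
      exact ⟨q.2, hq2⟩
  rw [heq]
  exact isGδ_Aset.inter (.iInter fun p => IsOpen.isGδ (isOpen_iUnion fun q =>
    (isOpen_coord _ _).inter (isOpen_coord _ _)))

theorem natv_continuous [Countable G] (eG : ℕ ≃ G) (h : G) (m : ℕ) :
    Continuous fun y : (Aset G ∩ Dset eG : Set (G → Fin 4)) => natv eG y.1 h m := by
  rw [continuous_iff_continuousAt]
  intro y₀
  have hA₀ : y₀.1 ∈ Aset G := y₀.2.1
  have hD₀ : y₀.1 ∈ Dset eG := y₀.2.2
  set s₀ := spt y₀.1 with hs₀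
  set j₀ := natv eG y₀.1 h m with hj₀
  have hne : {j | b2 (y₀.1 (site eG s₀ h m j)) = true}.Nonempty := hD₀ h m
  have hj₀mem : b2 (y₀.1 (site eG s₀ h m j₀)) = true := Nat.sInf_mem hne
  set N : Set (G → Fin 4) := {y | b1 (y s₀) = true ∧
    ∀ j ∈ Finset.range (j₀ + 1),
      b2 (y (site eG s₀ h m j)) = b2 (y₀.1 (site eG s₀ h m j))} with hN
  have hNopen : IsOpen N := by
    have : N = {y : G → Fin 4 | y s₀ ∈ {v | b1 v = true}} ∩
        ⋂ j ∈ Finset.range (j₀ + 1),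
          {y : G → Fin 4 | y (site eG s₀ h m j) ∈ {v | b2 v = b2 (y₀.1 (site eG s₀ h m j))}} := by
      ext y; simp [hN]
    rw [this]
    exact (isOpen_coord _ _).inter (isOpen_biInter_finset fun j _ => isOpen_coord _ _)
  have hval : ∀ y : (Aset G ∩ Dset eG : Set (G → Fin 4)), y.1 ∈ N →
      natv eG y.1 h m = j₀ := by
    rintro ⟨y, hAy, hDy⟩ ⟨hb1, hagree⟩
    have hspt : spt y = s₀ := ((spt_spec hAy).2 s₀ hb1).symm
    have hTdef : {j | b2 (y (site eG (spt y) h m j)) = true} =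
        {j | b2 (y (site eG s₀ h m j)) = true} := by rw [hspt]
    unfold natv
    rw [hTdef]
    have hj₀T : b2 (y (site eG s₀ h m j₀)) = true := by
      rw [hagree j₀ (Finset.mem_range.2 (Nat.lt_succ_self _))]
      exact hj₀mem
    refine le_antisymm (Nat.sInf_le hj₀T) ?_
    by_contra hc
    push_neg at hc
    have hmem := Nat.sInf_mem (⟨j₀, hj₀T⟩ :
      {j | b2 (y (site eG s₀ h m j)) = true}.Nonempty)
    set j₁ := sInf {j | b2 (y (site eG s₀ h m j)) = true}
    have hj₁lt : j₁ < j₀ := hc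
    have : b2 (y₀.1 (site eG s₀ h m j₁)) = true := by
      rw [← hagree j₁ (Finset.mem_range.2 (Nat.lt_succ_of_lt hj₁lt))]
      exact hmem
    have : j₀ ≤ j₁ := Nat.sInf_le this
    omega
  have hy₀N : y₀.1 ∈ N := by
    refine ⟨(spt_spec hA₀).1, fun j _ => rfl⟩
  refine ContinuousAt.congr (continuousAt_const (y := j₀)) ?_
  have hmem : (Subtype.val ⁻¹' N : Set (Aset G ∩ Dset eG : Set (G → Fin 4))) ∈ 𝓝 y₀ :=
    (hNopen.preimage continuous_subtype_val).mem_nhds hy₀N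
  exact Filter.eventually_of_mem hmem fun y hy => (hval y hy).symm

end S6


theorem stmt6 (G : Type*) [Group G] [Countable G] [Infinite G]
    (X : Type) [TopologicalSpace X] [PolishSpace X] [MulAction G X]
    (hcont : ∀ g : G, Continuous fun x : X => g • x) :
    ∃ Y : Set (G → Fin 4), IsGδ Y ∧
      (∀ (g : G) (x : G → Fin 4), x ∈ Y → bshift (Fin 4) g x ∈ Y) ∧
      ∃ φ : Y → X, Continuous φ ∧ Function.Surjective φ ∧
        ∀ (g : G) (x : G → Fin 4) (hx : x ∈ Y) (hgx : bshift (Fin 4) g x ∈ Y),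
          φ ⟨bshift (Fin 4) g x, hgx⟩ = g • φ ⟨x, hx⟩ := by
  rcases isEmpty_or_nonempty X with hX | hX
  · refine ⟨∅, IsGδ.empty, fun g x hx => absurd hx (Set.notMem_empty _),
      fun y => absurd y.2 (Set.notMem_empty _), ?_, fun x => (IsEmpty.false x).elim,
      fun g x hx => absurd hx (Set.notMem_empty _)⟩
    exact continuous_iff_continuousAt.2 fun y => absurd y.2 (Set.notMem_empty _)
  classical
  letI := TopologicalSpace.upgradeIsCompletelyMetrizable X
  obtain ⟨u, hu⟩ := TopologicalSpace.exists_dense_seq X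
  obtain ⟨dG⟩ := nonempty_denumerable G
  let eG : ℕ ≃ G := (Denumerable.eqv G).symm
  obtain ⟨r9, r9cont, r9surj⟩ := PolishSpace.exists_nat_nat_continuous_surjective ℝ
  -- the equivariant embedding of X into (ℕ → ℝ)^G
  set E : X → (G → ℕ → ℝ) := fun x h => iEmb u (h⁻¹ • x) with hEdef
  have hGδ_i : IsGδ (range (iEmb u)) := (range_iEmb hu) ▸ isGδ_iSet u
  have hE1 : ∀ x, E x 1 = iEmb u x := by
    intro x; simp only [hEdef, inv_one, one_smul]
  have hEinj : Function.Injective E := by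
    intro x x' hxx
    apply iEmb_injective hu
    rw [← hE1, ← hE1, hxx]
  have hEequiv : ∀ (g : G) (x : X), E (g • x) = bshift (ℕ → ℝ) g (E x) := by
    intro g x
    funext h
    show iEmb u (h⁻¹ • g • x) = iEmb u ((g⁻¹ * h)⁻¹ • x)
    rw [mul_inv_rev, inv_inv, mul_smul]
  -- the range of E is Gδ
  set S₁ : Set (G → ℕ → ℝ) := {w | w 1 ∈ range (iEmb u)} with hS₁def
  have hS₁Gδ : IsGδ S₁ := isGδ_preimage' (continuous_apply 1) hGδ_i
  have hmem₁ : ∀ w : S₁, ∃ x : X, iEmb u x = w.1 1 := fun w => w.2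
  set rInv : S₁ → X := fun w => (hmem₁ w).choose with hrInvdef
  have hrInv : ∀ w : S₁, iEmb u (rInv w) = w.1 1 := fun w => (hmem₁ w).choose_spec
  have hrInvCont : Continuous rInv := by
    apply cont_of_comp_iEmb hu
    have : (fun w : S₁ => iEmb u (rInv w)) = fun w : S₁ => w.1 1 := funext hrInv
    rw [this]
    exact (continuous_apply 1).comp continuous_subtype_val
  have hrangeE : IsGδ (range E) := by
    apply isGδ_transfer hS₁Gδ
    · rintro _ ⟨x, rfl⟩
      show E x 1 ∈ range (iEmb u)
      rw [hE1]
      exact mem_range_self x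
    · have heq : (Subtype.val ⁻¹' (range E) : Set S₁) =
          ⋂ h : G, {w : S₁ | w.1 h = iEmb u (h⁻¹ • rInv w)} := by
        ext w
        simp only [mem_preimage, mem_iInter, mem_setOf_eq, mem_range]
        constructor
        · rintro ⟨x, hx⟩ h
          have hx1 : iEmb u (rInv w) = iEmb u x := by
            rw [hrInv w, ← hx, hE1]
          rw [iEmb_injective hu hx1, ← hx]
        · intro hcond
          exact ⟨rInv w, funext fun h => (hcond h).symm⟩
      rw [heq]
      refine .iInter fun h => isGδ_of_isClosed' (isClosed_eq ?_ ?_)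
      · exact (continuous_apply h).comp continuous_subtype_val
      · exact (iEmb_continuous u).comp ((hcont h⁻¹).comp hrInvCont)
  -- the decoding map
  set big : (G → Fin 4) → (G → ℕ → ℝ) :=
    fun y h n => r9 (fun j => S6.natv eG y h (Nat.pair n j)) with hbigdef
  set S' : Set (G → Fin 4) := S6.Aset G ∩ S6.Dset eG with hS'def
  have hbigcont : Continuous fun y : S' => big y.1 :=
    continuous_pi fun h => continuous_pi fun n =>
      r9cont.comp (continuous_pi fun j => S6.natv_continuous eG h (Nat.pair n j))
  have hbigshift : ∀ (g : G) (y : G → Fin 4), y ∈ S6.Aset G →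
      big (bshift (Fin 4) g y) = bshift (ℕ → ℝ) g (big y) := by
    intro g y hy
    funext h n
    show r9 (fun j => S6.natv eG (bshift (Fin 4) g y) h (Nat.pair n j))
      = r9 (fun j => S6.natv eG y (g⁻¹ * h) (Nat.pair n j))
    have : ∀ j, S6.natv eG (bshift (Fin 4) g y) h j = S6.natv eG y (g⁻¹ * h) j :=
      fun j => S6.natv_shift eG g h j hy
    simp only [this]
  -- the invariant Gδ set
  set Y : Set (G → Fin 4) := S' ∩ big ⁻¹' (range E) with hYdef
  have hYGδ : IsGδ Y := by
    apply isGδ_transfer (hS'def ▸ S6.isGδ_AD eG) inter_subset_left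
    have : (Subtype.val ⁻¹' Y : Set S') = (fun y : S' => big y.1) ⁻¹' (range E) := by
      ext y
      simp only [mem_preimage, hYdef, mem_inter_iff]
      exact ⟨fun hh => hh.2, fun hh => ⟨y.2, hh⟩⟩
    rw [this]
    exact isGδ_preimage' hbigcont hrangeE
  have hYinv : ∀ (g : G) (y : G → Fin 4), y ∈ Y → bshift (Fin 4) g y ∈ Y := by
    rintro g y ⟨⟨hA, hD⟩, hpre⟩
    refine ⟨⟨S6.Aset_shift g hA, S6.Dset_shift eG g hA hD⟩, ?_⟩
    show big (bshift (Fin 4) g y) ∈ range E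
    rw [hbigshift g y hA]
    obtain ⟨x, hx⟩ := hpre
    exact ⟨g • x, by rw [hEequiv, hx]⟩
  -- the factor map
  have hmemY : ∀ y : Y, ∃ x : X, E x = big y.1 := fun y => y.2.2
  set φ : Y → X := fun y => (hmemY y).choose with hφdef
  have hφ : ∀ y : Y, E (φ y) = big y.1 := fun y => (hmemY y).choose_spec
  have hφcont : Continuous φ := by
    apply cont_of_comp_iEmb hu
    have : (fun y : Y => iEmb u (φ y)) = fun y : Y => big y.1 1 := by
      funext y
      rw [← hE1, hφ y]
    rw [this]
    exact (continuous_apply 1).comp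
      (hbigcont.comp (continuous_inclusion inter_subset_left))
  have hφsurj : Function.Surjective φ := by
    intro x
    choose α hα using fun (h : G) (n : ℕ) => r9surj (E x h n)
    set zf : G → ℕ → ℕ := fun h i => α h (Nat.unpair i).1 (Nat.unpair i).2 with hzfdef
    set y₀ : G → Fin 4 := fun k => S6.mk4 (decide (k = 1))
      (decide ((Nat.unpair (Nat.unpair (eG.symm k⁻¹)).2).2 =
        zf (eG (Nat.unpair (eG.symm k⁻¹)).1) ((Nat.unpair (Nat.unpair (eG.symm k⁻¹)).2).1)))
      with hy₀def
    have hb1 : ∀ k, S6.b1 (y₀ k) = decide (k = 1) := fun k => S6.b1_mk4 _ _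
    have hb2 : ∀ k, S6.b2 (y₀ k) = decide ((Nat.unpair (Nat.unpair (eG.symm k⁻¹)).2).2 =
        zf (eG (Nat.unpair (eG.symm k⁻¹)).1) ((Nat.unpair (Nat.unpair (eG.symm k⁻¹)).2).1)) :=
      fun k => S6.b2_mk4 _ _
    have hA : y₀ ∈ S6.Aset G := by
      refine ⟨1, by simp [hb1], fun k hk => ?_⟩
      have hk' : S6.b1 (y₀ k) = true := hk
      rw [hb1 k] at hk'
      simpa using hk'
    have hspt : S6.spt y₀ = 1 := ((S6.spt_spec hA).2 1 (by simp [hb1])).symm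
    have hkey : ∀ (h : G) (m j : ℕ),
        S6.b2 (y₀ (S6.site eG 1 h m j)) = decide (j = zf h m) := by
      intro h m j
      have hsite : (S6.site eG 1 h m j)⁻¹ = eG (Nat.pair (eG.symm h) (Nat.pair m j)) := by
        simp [S6.site]
      rw [hb2, hsite]
      simp [Nat.unpair_pair, Equiv.symm_apply_apply, Equiv.apply_symm_apply]
    have hnatv : ∀ (h : G) (m : ℕ), S6.natv eG y₀ h m = zf h m := by
      intro h m
      unfold S6.natv
      rw [hspt]
      have : {j | S6.b2 (y₀ (S6.site eG 1 h m j)) = true} = {zf h m} := by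
        ext j
        simp [hkey]
      rw [this]
      exact csInf_singleton _
    have hD : y₀ ∈ S6.Dset eG := by
      intro h m
      refine ⟨zf h m, ?_⟩
      rw [hspt, hkey]
      simp
    have hbigy₀ : big y₀ = E x := by
      funext h n
      show r9 (fun j => S6.natv eG y₀ h (Nat.pair n j)) = E x h n
      have : (fun j => S6.natv eG y₀ h (Nat.pair n j)) = α h n := by
        funext j
        rw [hnatv]
        simp [hzfdef, Nat.unpair_pair]
      rw [this, hα]
    have hyY : y₀ ∈ Y := by
      refine ⟨⟨hA, hD⟩, ?_⟩
      show big y₀ ∈ range E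
      rw [hbigy₀]
      exact mem_range_self x
    exact ⟨⟨y₀, hyY⟩, hEinj ((hφ ⟨y₀, hyY⟩).trans hbigy₀)⟩
  refine ⟨Y, hYGδ, hYinv, φ, hφcont, hφsurj, ?_⟩
  intro g y hy hgy
  apply hEinj
  rw [hφ, hEequiv, hφ]
  exact hbigshift g y hy.1.1
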